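/- Let m ≥ 1. The group Γ_P generated by the transvections τ^P_j, 2 ≤ j ≤ m, has exactly m+1 orbits in 𝔽₂^m, and exactly two of these orbits are fixed points of the Γ_P-action. -/

import Mathlib

open scoped Classical

noncomputable section

/-- The `i`-th coordinate (1-indexed) of `ζ ∈ 𝔽₂^m`, interpreted as `0` for `i` out of range. -/
def padP {m : ℕ} (ζ : Fin m → ZMod 2) (i : ℕ) : ZMod 2 :=
  if h : 1 ≤ i ∧ i ≤ m then ζ ⟨i - 1, by omega⟩ else 0

/-- The transvection `τ^P_j(ζ) = ζ + (ζ_{j-1} + ζ_{j+1}) e_j`. -/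
def tauP (m j : ℕ) (ζ : Fin m → ZMod 2) : Fin m → ZMod 2 :=
  fun k => if (k : ℕ) + 1 = j then ζ k + (padP ζ (j - 1) + padP ζ (j + 1)) else ζ k

/-- The group `Γ_P`, generated by the transvections `τ^P_j`, `2 ≤ j ≤ m`. -/
def GammaP (m : ℕ) : Subgroup (Equiv.Perm (Fin m → ZMod 2)) :=
  Subgroup.closure {g | ∃ j, 2 ≤ j ∧ j ≤ m ∧ ⇑g = tauP m j}

/-- The group `Γ_P` has exactly `m + 1` orbits in `𝔽₂^m`, and exactly two of these
orbits are fixed points of the `Γ_P`-action. -/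
lemma padP_coe {m : ℕ} (ζ : Fin m → ZMod 2) (k : Fin m) : padP ζ ((k : ℕ) + 1) = ζ k := by
  have hk := k.isLt
  rw [padP, dif_pos ⟨by omega, by omega⟩]
  congr 1

lemma padP_tauP {m j : ℕ} (ζ : Fin m → ZMod 2) (i : ℕ) (h : i ≠ j) :
    padP (tauP m j ζ) i = padP ζ i := by
  rw [padP, padP]
  split_ifs with hi
  · rw [tauP]
    refine if_neg ?_
    show ¬(i - 1 + 1 = j)
    omega
  · rfl

lemma tauP_invol (m j : ℕ) : Function.Involutive (tauP m j) := by
  intro ζ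
  rcases Nat.eq_zero_or_pos j with rfl | hj
  · funext k; rw [tauP, if_neg (by omega), tauP, if_neg (by omega)]
  · funext k
    rw [tauP]
    split_ifs with h
    · rw [padP_tauP _ _ (by omega), padP_tauP _ _ (by omega), tauP, if_pos h]
      have : ∀ a b : ZMod 2, a + b + b = a := by decide
      exact this _ _
    · rw [tauP, if_neg h]

def permTau (m j : ℕ) : Equiv.Perm (Fin m → ZMod 2) := (tauP_invol m j).toPerm

lemma permTau_coe (m j : ℕ) : ⇑(permTau m j) = tauP m j := rfl

lemma permTau_mem {m j : ℕ} (h2 : 2 ≤ j) (hm : j ≤ m) : permTau m j ∈ GammaP m :=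
  Subgroup.subset_closure ⟨j, h2, hm, rfl⟩

def Dmap {m : ℕ} (ζ : Fin m → ZMod 2) : Fin m → ZMod 2 :=
  fun k => padP ζ ((k : ℕ) + 1) + padP ζ ((k : ℕ) + 2)

def wtP {m : ℕ} (d : Fin m → ZMod 2) : ℕ := Fintype.card {i // d i = 1}

lemma wtP_comp {m : ℕ} (d : Fin m → ZMod 2) (π : Equiv.Perm (Fin m)) :
    wtP (d ∘ π) = wtP d :=
  Fintype.card_congr (π.subtypeEquiv fun _ => Iff.rfl)

lemma padP_tauP_self {m j : ℕ} (ζ : Fin m → ZMod 2) (h1 : 1 ≤ j) (h2 : j ≤ m) :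
    padP (tauP m j ζ) j = padP ζ j + (padP ζ (j - 1) + padP ζ (j + 1)) := by
  rw [padP, padP, dif_pos ⟨h1, h2⟩, dif_pos ⟨h1, h2⟩, tauP, if_pos (show j - 1 + 1 = j by omega)]

lemma Dmap_tauP {m j : ℕ} (h2 : 2 ≤ j) (hm : j ≤ m) (ζ : Fin m → ZMod 2) :
    Dmap (tauP m j ζ) =
      Dmap ζ ∘ (Equiv.swap (⟨j - 2, by omega⟩ : Fin m) (⟨j - 1, by omega⟩ : Fin m)) := by
  have hab : (⟨j - 2, by omega⟩ : Fin m) ≠ (⟨j - 1, by omega⟩ : Fin m) := by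
    intro h; exact absurd (congrArg Fin.val h) (by simp; omega)
  funext k
  rcases eq_or_ne k (⟨j - 2, by omega⟩ : Fin m) with rfl | ha
  · rw [Function.comp_apply, Equiv.swap_apply_left, Dmap, Dmap]
    show padP (tauP m j ζ) (j - 2 + 1) + padP (tauP m j ζ) (j - 2 + 2) =
      padP ζ (j - 1 + 1) + padP ζ (j - 1 + 2)
    rw [show j - 2 + 1 = j - 1 by omega, show j - 2 + 2 = j by omega,
      show j - 1 + 1 = j by omega, show j - 1 + 2 = j + 1 by omega,
      padP_tauP ζ (j - 1) (by omega), padP_tauP_self ζ (by omega) hm]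
    have : ∀ a b c : ZMod 2, a + (b + (a + c)) = b + c := by decide
    exact this _ _ _
  · rcases eq_or_ne k (⟨j - 1, by omega⟩ : Fin m) with rfl | hb
    · rw [Function.comp_apply, Equiv.swap_apply_right, Dmap, Dmap]
      show padP (tauP m j ζ) (j - 1 + 1) + padP (tauP m j ζ) (j - 1 + 2) =
        padP ζ (j - 2 + 1) + padP ζ (j - 2 + 2)
      rw [show j - 1 + 1 = j by omega, show j - 1 + 2 = j + 1 by omega,
        show j - 2 + 1 = j - 1 by omega, show j - 2 + 2 = j by omega,
        padP_tauP ζ (j + 1) (by omega), padP_tauP_self ζ (by omega) hm]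
      have : ∀ a b c : ZMod 2, a + (b + c) + c = b + a := by decide
      exact this _ _ _
    · rw [Function.comp_apply, Equiv.swap_apply_of_ne_of_ne ha hb, Dmap, Dmap]
      have h1 : (k : ℕ) + 1 ≠ j := by
        intro h; apply hb; exact Fin.ext (show (k : ℕ) = j - 1 by omega)
      have h2' : (k : ℕ) + 2 ≠ j := by
        intro h; apply ha; exact Fin.ext (show (k : ℕ) = j - 2 by omega)
      rw [padP_tauP _ _ h1, padP_tauP _ _ h2']

lemma wtP_invariant {m : ℕ} {g : Equiv.Perm (Fin m → ZMod 2)} (hg : g ∈ GammaP m)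
    (ζ : Fin m → ZMod 2) : wtP (Dmap (g ζ)) = wtP (Dmap ζ) := by
  revert ζ
  refine Subgroup.closure_induction ?_ ?_ ?_ ?_ hg
  · rintro g ⟨j, hj2, hjm, hgj⟩ ζ
    rw [hgj, Dmap_tauP hj2 hjm, wtP_comp]
  · intro ζ; rfl
  · intro a b _ _ ha hb ζ
    rw [Equiv.Perm.mul_apply, ha, hb]
  · intro a _ ha ζ
    have := ha (a⁻¹ ζ)
    rw [← Equiv.Perm.mul_apply, mul_inv_cancel, Equiv.Perm.one_apply] at this
    exact this.symm

lemma Dmap_injective {m : ℕ} : Function.Injective (Dmap (m := m)) := by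
  intro ζ η h
  funext k
  have key : ∀ t : ℕ, ∀ k : Fin m, m - (k : ℕ) ≤ t → ζ k = η k := by
    intro t
    induction t with
    | zero => intro k hk; exact absurd hk (by have := k.isLt; omega)
    | succ t ih =>
      intro k hk
      have hd := congrFun h k
      rw [Dmap, Dmap, padP_coe, padP_coe] at hd
      rcases Nat.lt_or_ge ((k : ℕ) + 1) m with hlt | hge
      · have hnext : ζ ⟨(k : ℕ) + 1, hlt⟩ = η ⟨(k : ℕ) + 1, hlt⟩ := ih _ (by simp; omega)
        have e1 : padP ζ ((k : ℕ) + 2) = ζ ⟨(k : ℕ) + 1, hlt⟩ := by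
          rw [padP, dif_pos ⟨by omega, by omega⟩]; congr 1
        have e2 : padP η ((k : ℕ) + 2) = η ⟨(k : ℕ) + 1, hlt⟩ := by
          rw [padP, dif_pos ⟨by omega, by omega⟩]; congr 1
        rw [e1, e2, hnext] at hd
        exact add_right_cancel hd
      · have e1 : padP ζ ((k : ℕ) + 2) = 0 := by rw [padP, dif_neg (by omega)]
        have e2 : padP η ((k : ℕ) + 2) = 0 := by rw [padP, dif_neg (by omega)]
        rw [e1, e2] at hd
        exact add_right_cancel hd
  exact key m k (by omega)

lemma exists_g {m : ℕ} (π : Equiv.Perm (Fin m)) (hm : 1 ≤ m) :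
    ∃ g ∈ GammaP m, ∀ ζ, Dmap (g ζ) = Dmap ζ ∘ π := by
  obtain ⟨n, rfl⟩ : ∃ n, m = n + 1 := ⟨m - 1, by omega⟩
  let H : Submonoid (Equiv.Perm (Fin (n + 1))) :=
    { carrier := {π | ∃ g ∈ GammaP (n + 1), ∀ ζ, Dmap (g ζ) = Dmap ζ ∘ π}
      one_mem' := ⟨1, one_mem _, fun ζ => rfl⟩
      mul_mem' := by
        rintro π₁ π₂ ⟨g₁, hg₁, h₁⟩ ⟨g₂, hg₂, h₂⟩
        refine ⟨g₂ * g₁, mul_mem hg₂ hg₁, fun ζ => ?_⟩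
        rw [Equiv.Perm.mul_apply, h₂, h₁]
        rfl }
  have htop : H = ⊤ := by
    rw [eq_top_iff, ← Equiv.Perm.mclosure_swap_castSucc_succ n, Submonoid.closure_le]
    rintro _ ⟨i, rfl⟩
    have hi := i.isLt
    have hswap : Equiv.swap i.castSucc i.succ =
        Equiv.swap (⟨(i : ℕ) + 2 - 2, by omega⟩ : Fin (n + 1))
          (⟨(i : ℕ) + 2 - 1, by omega⟩ : Fin (n + 1)) := by
      congr 1 <;> exact Fin.ext (by simp [Fin.castSucc, Fin.succ]; omega)
    refine ⟨permTau (n + 1) ((i : ℕ) + 2), permTau_mem (by omega) (by omega), fun ζ => ?_⟩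
    rw [permTau_coe, Dmap_tauP (by omega) (by omega)]
    show Dmap ζ ∘ _ = Dmap ζ ∘ ⇑(Equiv.swap i.castSucc i.succ)
    rw [hswap]
  have : π ∈ H := htop ▸ Submonoid.mem_top π
  exact this

lemma exists_wt {m : ℕ} (n : ℕ) (hn : n ≤ m) : ∃ ζ : Fin m → ZMod 2, wtP (Dmap ζ) = n := by
  refine ⟨fun k => if (k : ℕ) < n ∧ (n - (k : ℕ)) % 2 = 1 then 1 else 0, ?_⟩
  set ζ : Fin m → ZMod 2 := fun k => if (k : ℕ) < n ∧ (n - (k : ℕ)) % 2 = 1 then 1 else 0 with hζ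
  have hD : Dmap ζ = fun k : Fin m => if (k : ℕ) < n then (1 : ZMod 2) else 0 := by
    funext k
    have hk := k.isLt
    rw [Dmap, padP_coe]
    rcases Nat.lt_or_ge ((k : ℕ) + 1) m with hlt | hge
    · have e1 : padP ζ ((k : ℕ) + 2) = ζ ⟨(k : ℕ) + 1, hlt⟩ := by
        rw [padP, dif_pos ⟨by omega, by omega⟩]; congr 1
      rw [e1, hζ]
      simp only
      split_ifs with h1 h2 h2 h3 h3 <;> try omega
      all_goals first | decide | (exfalso; omega)
    · have e1 : padP ζ ((k : ℕ) + 2) = 0 := by rw [padP, dif_neg (by omega)]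
      rw [e1, hζ]
      simp only
      split_ifs with h1 h2 h2 <;> first | decide | (exfalso; omega)
  rw [hD, wtP]
  have e : {i : Fin m // (if (i : ℕ) < n then (1 : ZMod 2) else 0) = 1} ≃ Fin n :=
    { toFun := fun x => ⟨(x.1 : ℕ), by
        rcases Nat.lt_or_ge ((x.1 : ℕ)) n with h | h
        · exact h
        · exfalso; have := x.2; rw [if_neg (by omega)] at this; exact absurd this (by decide)⟩
      invFun := fun y => ⟨⟨(y : ℕ), by omega⟩, by rw [if_pos (by exact y.isLt)]⟩
      left_inv := fun x => by ext; rfl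
      right_inv := fun y => by ext; rfl }
  rw [Fintype.card_congr e, Fintype.card_fin]

lemma orbit_iff {m : ℕ} (hm : 1 ≤ m) (ζ η : Fin m → ZMod 2) :
    (MulAction.orbitRel (GammaP m) (Fin m → ZMod 2)).r ζ η ↔
      wtP (Dmap ζ) = wtP (Dmap η) := by
  constructor
  · rintro ⟨g, rfl⟩
    exact wtP_invariant g.2 η
  · intro h
    have hcard : Fintype.card {i // Dmap η i = 1} = Fintype.card {i // Dmap ζ i = 1} :=
      h.symm
    let e := Fintype.equivOfCardEq hcard
    let π : Equiv.Perm (Fin m) := e.extendSubtype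
    have hπ : Dmap ζ ∘ π = Dmap η := by
      funext x
      have h2 : ∀ a b : ZMod 2, (a = 1 → b = 1) → (¬a = 1 → ¬b = 1) → b = a := by decide
      refine h2 _ _ (fun hx => ?_) (fun hx => ?_)
      · exact e.extendSubtype_mem x hx
      · exact e.extendSubtype_not_mem x hx
    obtain ⟨g, hg, hgπ⟩ := exists_g π⁻¹ hm
    refine ⟨⟨g, hg⟩, ?_⟩
    show g η = ζ
    apply Dmap_injective
    rw [hgπ η, ← hπ]
    funext x
    show Dmap ζ (π (π⁻¹ x)) = Dmap ζ x
    rw [← Equiv.Perm.mul_apply, mul_inv_cancel, Equiv.Perm.one_apply]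

lemma part1 {m : ℕ} (hm : 1 ≤ m) :
    Nat.card (MulAction.orbitRel.Quotient (GammaP m) (Fin m → ZMod 2)) = m + 1 := by
  have hle : ∀ ζ : Fin m → ZMod 2, wtP (Dmap ζ) < m + 1 := fun ζ =>
    Nat.lt_succ_of_le (le_trans (Fintype.card_subtype_le _) (le_of_eq (Fintype.card_fin m)))
  let F : MulAction.orbitRel.Quotient (GammaP m) (Fin m → ZMod 2) → Fin (m + 1) :=
    Quotient.lift (fun ζ => (⟨wtP (Dmap ζ), hle ζ⟩ : Fin (m + 1)))
      (fun a b hab => Fin.ext ((orbit_iff hm a b).1 hab))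
  have hbij : Function.Bijective F := by
    constructor
    · intro x y
      induction x using Quotient.ind
      induction y using Quotient.ind
      intro h
      exact Quotient.sound ((orbit_iff hm _ _).2 (congrArg Fin.val h))
    · rintro ⟨k, hk⟩
      obtain ⟨ζ, hζ⟩ := exists_wt (m := m) k (by omega)
      exact ⟨⟦ζ⟧, Fin.ext hζ⟩
  rw [Nat.card_eq_of_bijective F hbij, Nat.card_eq_fintype_card, Fintype.card_fin]

lemma fix_iff {m j : ℕ} (h2 : 2 ≤ j) (hm : j ≤ m) (ζ : Fin m → ZMod 2) :
    tauP m j ζ = ζ ↔ padP ζ (j - 1) = padP ζ (j + 1) := by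
  constructor
  · intro h
    have hc := congrFun h ⟨j - 1, by omega⟩
    rw [tauP, if_pos (show j - 1 + 1 = j by omega)] at hc
    have h2' : ∀ a b c : ZMod 2, a + (b + c) = a → b = c := by decide
    exact h2' _ _ _ hc
  · intro h
    funext k
    rw [tauP]
    split_ifs with hk
    · rw [h]
      have : ∀ a c : ZMod 2, a + (c + c) = a := by decide
      exact this _ _
    · rfl

def vP (m : ℕ) : Fin m → ZMod 2 := fun i => if (m - 1 - (i : ℕ)) % 2 = 0 then 1 else 0

lemma fixed_set {m : ℕ} (hm : 1 ≤ m) :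
    {ζ : Fin m → ZMod 2 | ∀ j, 2 ≤ j → j ≤ m → tauP m j ζ = ζ} = {0, vP m} := by
  ext ζ
  simp only [Set.mem_setOf_eq, Set.mem_insert_iff, Set.mem_singleton_iff]
  constructor
  · intro h
    have hcond : ∀ p : ℕ, 1 ≤ p → p ≤ m - 1 → padP ζ p = padP ζ (p + 2) := by
      intro p hp1 hp2
      have := (fix_iff (j := p + 1) (by omega) (by omega) ζ).1 (h (p + 1) (by omega) (by omega))
      rwa [show p + 1 - 1 = p by omega, show p + 1 + 1 = p + 2 by omega] at this
    set c := ζ ⟨m - 1, by omega⟩ with hc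
    have key : ∀ t : ℕ, ∀ i : Fin m, m - 1 - (i : ℕ) = t →
        ζ i = if (m - 1 - (i : ℕ)) % 2 = 0 then c else 0 := by
      intro t
      induction t using Nat.strong_induction_on with
      | _ t ih =>
        intro i hi
        have him := i.isLt
        rcases Nat.lt_or_ge t 2 with ht | ht
        · interval_cases t
          · rw [hi]
            have : i = ⟨m - 1, by omega⟩ := Fin.ext (show (i : ℕ) = m - 1 by omega)
            rw [this, if_pos (by omega)]
          · -- i = m - 2, value must be 0
            have him2 : (i : ℕ) = m - 2 := by omega
            have hm2 : 2 ≤ m := by omega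
            have := hcond (m - 1) (by omega) (by omega)
            rw [show m - 1 + 2 = m + 1 by omega] at this
            have e0 : padP ζ (m + 1) = 0 := by rw [padP, dif_neg (by omega)]
            have e1 : padP ζ (m - 1) = ζ i := by
              rw [padP, dif_pos ⟨by omega, by omega⟩]
              congr 1
              exact Fin.ext (by simp; omega)
            rw [e0, e1] at this
            rw [this, hi, if_neg (by omega)]
        · have hstep := hcond ((i : ℕ) + 1) (by omega) (by omega)
          have e1 : padP ζ ((i : ℕ) + 1) = ζ i := padP_coe ζ i
          have e2 : padP ζ ((i : ℕ) + 1 + 2) = ζ ⟨(i : ℕ) + 2, by omega⟩ := by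
            rw [padP, dif_pos ⟨by omega, by omega⟩]
            congr 1
          rw [e1, e2] at hstep
          have hih := ih (t - 2) (by omega) ⟨(i : ℕ) + 2, by omega⟩ (by simp; omega)
          rw [hstep, hih]
          have : (m - 1 - ((i : ℕ) + 2)) % 2 = (m - 1 - (i : ℕ)) % 2 := by omega
          rw [this]
    have hval : ∀ i : Fin m, ζ i = if (m - 1 - (i : ℕ)) % 2 = 0 then c else 0 :=
      fun i => key (m - 1 - (i : ℕ)) i rfl
    have hc01 : c = 0 ∨ c = 1 := by
      have : ∀ a : ZMod 2, a = 0 ∨ a = 1 := by decide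
      exact this c
    rcases hc01 with h0 | h1
    · left
      funext i
      rw [hval i, h0]
      split_ifs <;> rfl
    · right
      funext i
      rw [hval i, h1, vP]
  · intro h
    rcases h with rfl | rfl
    · intro j hj2 hjm
      rw [fix_iff hj2 hjm]
      rw [padP, padP]
      split_ifs <;> rfl
    · intro j hj2 hjm
      rw [fix_iff hj2 hjm]
      have e1 : padP (vP m) (j - 1) = if (m - 1 - (j - 2)) % 2 = 0 then 1 else 0 := by
        rw [padP, dif_pos ⟨by omega, by omega⟩, vP]
        simp only
        congr 1
      rcases Nat.lt_or_ge m (j + 1) with hj | hj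
      · have e2 : padP (vP m) (j + 1) = 0 := by rw [padP, dif_neg (by omega)]
        rw [e1, e2, if_neg (by omega)]
      · have e2 : padP (vP m) (j + 1) = if (m - 1 - j) % 2 = 0 then 1 else 0 := by
          rw [padP, dif_pos ⟨by omega, by omega⟩, vP]
          simp only
          congr 1
        rw [e1, e2]
        have : (m - 1 - (j - 2)) % 2 = (m - 1 - j) % 2 := by omega
        rw [this]

lemma part2 {m : ℕ} (hm : 1 ≤ m) :
    Nat.card {ζ : Fin m → ZMod 2 | ∀ j, 2 ≤ j → j ≤ m → tauP m j ζ = ζ} = 2 := by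
  rw [fixed_set hm, Nat.card_coe_set_eq, Set.ncard_pair]
  intro h
  have := congrFun h ⟨m - 1, by omega⟩
  rw [vP] at this
  simp only at this
  rw [if_pos (by omega), Pi.zero_apply] at this
  exact absurd this (by decide)

theorem number_of_GammaP_orbits (m : ℕ) (hm : 1 ≤ m) :
    Nat.card (MulAction.orbitRel.Quotient (GammaP m) (Fin m → ZMod 2)) = m + 1 ∧
    Nat.card {ζ : Fin m → ZMod 2 | ∀ j, 2 ≤ j → j ≤ m → tauP m j ζ = ζ} = 2 := by
  exact ⟨part1 hm, part2 hm⟩
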